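/- (Glaisher) For every prime p ≥ 7 and every odd r with 3 ≤ r ≤ p-2, the elementary symmetric polynomial A_r of 1,...,p-1 satisfies A_r ≡ (p(p-r)/2)·A_{r-1} mod p³. -/

import Mathlib

/-- The `k`-th elementary symmetric function of `1, 2, …, n`. -/
def esymmA (n k : ℕ) : ℕ :=
  ∑ t ∈ (Finset.Icc 1 n).powersetCard k, ∏ i ∈ t, i

open Finset

namespace Glaisher17

lemma mem_img {p k : ℕ} {t : Finset ℕ} (ht : t ∈ (Icc 1 (p-1)).powersetCard k) :
    t.image (fun i => p - i) ∈ (Icc 1 (p-1)).powersetCard k := by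
  rw [mem_powersetCard] at ht ⊢
  obtain ⟨hsub, hcard⟩ := ht
  constructor
  · intro a ha
    simp only [mem_image] at ha
    obtain ⟨i, hi, rfl⟩ := ha
    have := hsub hi
    simp only [mem_Icc] at this ⊢
    omega
  · rw [card_image_of_injOn, hcard]
    intro i hi j hj h
    have h1 := hsub hi; have h2 := hsub hj
    simp only [mem_Icc] at h1 h2
    dsimp at h; omega

lemma img_img {p : ℕ} {t : Finset ℕ} (hsub : t ⊆ Icc 1 (p-1)) :
    (t.image (fun i => p - i)).image (fun i => p - i) = t := by
  rw [Finset.image_image]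
  rw [show t.image ((fun i => p - i) ∘ (fun i => p - i)) = t.image id from
    Finset.image_congr fun i hi => by
      have := hsub hi; simp only [mem_Icc] at this; simp; omega]
  exact Finset.image_id

/-- General reindexing along the involution `i ↦ p - i` on `Icc 1 (p-1)`. -/
lemma reindex {M : Type*} [AddCommMonoid M] (p k : ℕ) (g : Finset ℕ → M) :
    ∑ t ∈ (Icc 1 (p-1)).powersetCard k, g t
      = ∑ t ∈ (Icc 1 (p-1)).powersetCard k, g (t.image (fun i => p - i)) := by
  refine (Finset.sum_nbij' (i := fun t => t.image (fun i => p - i))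
    (j := fun t => t.image (fun i => p - i)) ?_ ?_ ?_ ?_ ?_).symm
  all_goals intro t ht
  · exact mem_img ht
  · exact mem_img ht
  · exact img_img (mem_powersetCard.1 ht).1
  · exact img_img (mem_powersetCard.1 ht).1
  · rfl

lemma injOn_sig {p : ℕ} {t : Finset ℕ} (hsub : t ⊆ Icc 1 (p-1)) :
    ∀ i ∈ t, ∀ j ∈ t, p - i = p - j → i = j := by
  intro i hi j hj h
  have h1 := hsub hi; have h2 := hsub hj
  simp only [mem_Icc] at h1 h2; omega

lemma prod_img {R : Type*} [CommMonoid R] {p : ℕ} {t : Finset ℕ}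
    (hsub : t ⊆ Icc 1 (p-1)) (v : ℕ → R) :
    ∏ i ∈ t.image (fun i => p - i), v i = ∏ i ∈ t, v (p - i) :=
  Finset.prod_image (injOn_sig hsub)

lemma img_sdiff {p : ℕ} {s t : Finset ℕ} (hsub : t ⊆ Icc 1 (p-1)) (hst : s ⊆ t) :
    (t.image (fun i => p - i)) \ (s.image (fun i => p - i))
      = (t \ s).image (fun i => p - i) := by
  ext a
  simp only [mem_sdiff, mem_image]
  constructor
  · rintro ⟨⟨i, hi, rfl⟩, hns⟩
    exact ⟨i, ⟨hi, fun his => hns ⟨i, his, rfl⟩⟩, rfl⟩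
  · rintro ⟨i, ⟨hit, hins⟩, rfl⟩
    refine ⟨⟨i, hit, rfl⟩, ?_⟩
    rintro ⟨j, hjs, hji⟩
    exact hins (injOn_sig hsub j (hst hjs) i hit hji ▸ hjs)

/-- The auxiliary double sum over `r`-subsets `t` and `j`-subsets `s ⊆ t`. -/
noncomputable def T (p r j : ℕ) : ℤ :=
  ∑ t ∈ (Icc 1 (p-1)).powersetCard r, ∑ s ∈ t.powersetCard j, ∏ i ∈ t \ s, (i:ℤ)

lemma expand (p r : ℕ) :
    (esymmA (p-1) r : ℤ) = ∑ j ∈ range (r+1), (-1:ℤ)^(r-j) * p^j * T p r j := by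
  have h1 : (esymmA (p-1) r : ℤ)
      = ∑ t ∈ (Icc 1 (p-1)).powersetCard r, ∏ i ∈ t, (i:ℤ) := by
    unfold esymmA; push_cast; rfl
  rw [h1, reindex p r (fun t => ∏ i ∈ t, (i:ℤ))]
  have h2 : ∀ t ∈ (Icc 1 (p-1)).powersetCard r,
      ∏ i ∈ t.image (fun i => p - i), (i:ℤ)
        = ∑ j ∈ range (r+1), ∑ s ∈ t.powersetCard j,
            (-1:ℤ)^(r-j) * (p:ℤ)^j * ∏ i ∈ t \ s, (i:ℤ) := by
    intro t ht
    rw [mem_powersetCard] at ht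
    obtain ⟨hsub, hcard⟩ := ht
    rw [prod_img hsub]
    have hcast : ∀ i ∈ t, ((p - i : ℕ) : ℤ) = (p:ℤ) + (-(i:ℤ)) := by
      intro i hi; have := hsub hi; simp only [mem_Icc] at this
      omega
    rw [Finset.prod_congr rfl hcast, Finset.prod_add, Finset.sum_powerset, hcard]
    refine Finset.sum_congr rfl fun j hj => Finset.sum_congr rfl fun s hs => ?_
    rw [mem_powersetCard] at hs
    obtain ⟨hst, hsc⟩ := hs
    rw [Finset.prod_const, hsc]
    have : ∀ i ∈ t \ s, (-(i:ℤ)) = (-1) * (i:ℤ) := fun i _ => by ring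
    rw [Finset.prod_congr rfl this, Finset.prod_mul_distrib, Finset.prod_const,
      Finset.card_sdiff_of_subset hst, hcard, hsc]
    ring
  rw [Finset.sum_congr rfl h2, Finset.sum_comm]
  refine Finset.sum_congr rfl fun j hj => ?_
  unfold T
  rw [Finset.mul_sum]
  refine Finset.sum_congr rfl fun t ht => ?_
  rw [Finset.mul_sum]

lemma T_zero (p r : ℕ) : T p r 0 = (esymmA (p-1) r : ℤ) := by
  unfold T esymmA
  push_cast
  refine Finset.sum_congr rfl fun t ht => ?_
  rw [Finset.powersetCard_zero, Finset.sum_singleton, Finset.sdiff_empty]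

lemma T_one (p r : ℕ) (hr1 : 1 ≤ r) (hr2 : r ≤ p - 1) :
    T p r 1 = ((p - r : ℕ) : ℤ) * (esymmA (p-1) (r-1) : ℤ) := by
  unfold T
  have h1 : ∀ t ∈ (Icc 1 (p-1)).powersetCard r,
      ∑ s ∈ t.powersetCard 1, ∏ i ∈ t \ s, (i:ℤ)
        = ∑ a ∈ t, ∏ i ∈ t.erase a, (i:ℤ) := by
    intro t _
    rw [Finset.powersetCard_one, Finset.sum_map]
    refine Finset.sum_congr rfl fun a _ => ?_
    congr 1
    simp [Finset.sdiff_singleton_eq_erase]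
  rw [Finset.sum_congr rfl h1, Finset.sum_sigma']
  rw [Finset.sum_nbij' (i := fun x => (⟨x.1.erase x.2, x.2⟩ :
        Σ _ : Finset ℕ, ℕ))
      (j := fun x => (⟨insert x.2 x.1, x.2⟩ : Σ _ : Finset ℕ, ℕ))
      (t := ((Icc 1 (p-1)).powersetCard (r-1)).sigma fun u => Icc 1 (p-1) \ u)
      (g := fun x => ∏ i ∈ x.1, (i:ℤ)) ?_ ?_ ?_ ?_ ?_]
  · rw [Finset.sum_sigma]
    have : ∀ u ∈ (Icc 1 (p-1)).powersetCard (r-1),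
        ∑ a ∈ Icc 1 (p-1) \ u, ∏ i ∈ u, (i:ℤ)
          = ((p - r : ℕ) : ℤ) * ∏ i ∈ u, (i:ℤ) := by
      intro u hu
      rw [mem_powersetCard] at hu
      rw [Finset.sum_const, Finset.card_sdiff_of_subset hu.1, Nat.card_Icc, hu.2]
      have : p - 1 + 1 - 1 - (r - 1) = p - r := by omega
      rw [this, nsmul_eq_mul]
    rw [Finset.sum_congr rfl this, ← Finset.mul_sum]
    unfold esymmA
    push_cast
    rfl
  · rintro ⟨t, a⟩ hx
    simp only [Finset.mem_sigma, mem_powersetCard, Finset.mem_sdiff] at hx ⊢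
    obtain ⟨⟨hsub, hcard⟩, hat⟩ := hx
    exact ⟨⟨(Finset.erase_subset _ _).trans hsub, by
        rw [Finset.card_erase_of_mem hat, hcard]⟩,
      hsub hat, Finset.notMem_erase _ _⟩
  · rintro ⟨u, a⟩ hx
    simp only [Finset.mem_sigma, mem_powersetCard, Finset.mem_sdiff] at hx ⊢
    obtain ⟨⟨hsub, hcard⟩, haS, hau⟩ := hx
    refine ⟨⟨Finset.insert_subset haS hsub, ?_⟩, Finset.mem_insert_self _ _⟩
    rw [Finset.card_insert_of_notMem hau, hcard]
    omega
  · rintro ⟨t, a⟩ hx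
    simp only [Finset.mem_sigma, mem_powersetCard] at hx
    simp [Finset.insert_erase hx.2]
  · rintro ⟨u, a⟩ hx
    simp only [Finset.mem_sigma, Finset.mem_sdiff] at hx
    simp [Finset.erase_insert hx.2.2]
  · rintro ⟨t, a⟩ hx
    rfl

lemma T_two_dvd (p r : ℕ) (hp : p.Prime) (hp7 : 7 ≤ p) (hrodd : Odd r)
    (hr1 : 3 ≤ r) : (p : ℤ) ∣ T p r 2 := by
  haveI : Fact p.Prime := ⟨hp⟩
  rw [← ZMod.intCast_zmod_eq_zero_iff_dvd]
  set g : Finset ℕ → ZMod p := fun t => ∑ s ∈ t.powersetCard 2, ∏ i ∈ t \ s, (i : ZMod p)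
    with hg
  have hT : ((T p r 2 : ℤ) : ZMod p) = ∑ t ∈ (Icc 1 (p-1)).powersetCard r, g t := by
    unfold T; push_cast; rfl
  have key : ∀ t ∈ (Icc 1 (p-1)).powersetCard r, g (t.image (fun i => p - i)) = - g t := by
    intro t ht
    have hsub := (mem_powersetCard.1 ht).1
    have hcard := (mem_powersetCard.1 ht).2
    rw [hg]
    dsimp only
    have h1 : ∑ s ∈ (t.image (fun i => p - i)).powersetCard 2,
          ∏ i ∈ (t.image (fun i => p - i)) \ s, (i : ZMod p)
        = ∑ s ∈ t.powersetCard 2,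
          ∏ i ∈ (t.image (fun i => p - i)) \ (s.image (fun i => p - i)), (i : ZMod p) := by
      refine (Finset.sum_nbij' (i := fun s => s.image (fun i => p - i))
        (j := fun s => s.image (fun i => p - i)) ?_ ?_ ?_ ?_ ?_).symm
      all_goals intro s hs
      · rw [mem_powersetCard] at hs ⊢
        exact ⟨Finset.image_subset_image hs.1, by
          rw [Finset.card_image_of_injOn fun i hi j hj h =>
            injOn_sig (hs.1.trans hsub) i hi j hj h, hs.2]⟩
      · rw [mem_powersetCard] at hs ⊢
        have hsubS : s ⊆ Icc 1 (p-1) :=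
          hs.1.trans (mem_powersetCard.1 (mem_img ht)).1
        constructor
        · intro a ha
          simp only [Finset.mem_image] at ha
          obtain ⟨i, hi, rfl⟩ := ha
          have := hs.1 hi
          rw [← img_img hsub]
          exact Finset.mem_image_of_mem _ this
        · rw [Finset.card_image_of_injOn fun i hi j hj h =>
            injOn_sig hsubS i hi j hj h, hs.2]
      · exact img_img ((mem_powersetCard.1 hs).1.trans hsub)
      · exact img_img ((mem_powersetCard.1 hs).1.trans
          (mem_powersetCard.1 (mem_img ht)).1)
      · rfl
    rw [h1]
    rw [← Finset.sum_neg_distrib]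
    refine Finset.sum_congr rfl fun s hs => ?_
    have hst := (mem_powersetCard.1 hs).1
    have hsc := (mem_powersetCard.1 hs).2
    rw [img_sdiff hsub hst, prod_img (Finset.sdiff_subset.trans hsub)]
    have h2 : ∀ i ∈ t \ s, ((p - i : ℕ) : ZMod p) = (-1) * (i : ZMod p) := by
      intro i hi
      have hiS := (Finset.sdiff_subset.trans hsub) hi
      simp only [mem_Icc] at hiS
      rw [Nat.cast_sub (by omega), ZMod.natCast_self]
      ring
    rw [Finset.prod_congr rfl h2, Finset.prod_mul_distrib, Finset.prod_const,
      Finset.card_sdiff_of_subset hst, hcard, hsc]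
    have : Odd (r - 2) := Nat.Odd.sub_even (by omega) hrodd (by norm_num)
    rw [this.neg_one_pow]
    ring
  have h2 : ((T p r 2 : ℤ) : ZMod p) = - ((T p r 2 : ℤ) : ZMod p) := by
    conv_lhs => rw [hT, reindex p r g, Finset.sum_congr rfl key]
    rw [Finset.sum_neg_distrib, hT]
  have h3 : (2 : ZMod p) * ((T p r 2 : ℤ) : ZMod p) = 0 := by
    linear_combination h2
  rcases mul_eq_zero.1 h3 with h | h
  · exfalso
    have : ((2 : ℕ) : ZMod p) = 0 := by exact_mod_cast h
    rw [ZMod.natCast_eq_zero_iff] at this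
    have := Nat.le_of_dvd (by norm_num) this
    omega
  · exact h

lemma key (p r : ℕ) (hp : p.Prime) (hp7 : 7 ≤ p) (hrodd : Odd r)
    (hr1 : 3 ≤ r) (hr2 : r ≤ p - 2) :
    ∃ c : ℤ, 2 * (esymmA (p-1) r : ℤ)
      = p * ((p:ℤ) - r) * (esymmA (p-1) (r-1) : ℤ) + p^3 * c := by
  obtain ⟨d, hd⟩ := T_two_dvd p r hp hp7 hrodd hr1
  refine ⟨(∑ j ∈ Ico 3 (r+1), (-1:ℤ)^(r-j) * p^(j-3) * T p r j) - d, ?_⟩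
  have hsplit : ∑ j ∈ range (r+1), (-1:ℤ)^(r-j) * p^j * T p r j
      = (∑ j ∈ range 3, (-1:ℤ)^(r-j) * p^j * T p r j)
        + ∑ j ∈ Ico 3 (r+1), (-1:ℤ)^(r-j) * p^j * T p r j := by
    rw [range_eq_Ico]
    exact (Finset.sum_Ico_consecutive _ (n := 3) (by omega) (by omega)).symm
  have htail : ∑ j ∈ Ico 3 (r+1), (-1:ℤ)^(r-j) * p^j * T p r j
      = p^3 * ∑ j ∈ Ico 3 (r+1), (-1:ℤ)^(r-j) * p^(j-3) * T p r j := by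
    rw [Finset.mul_sum]
    refine Finset.sum_congr rfl fun j hj => ?_
    rw [Finset.mem_Ico] at hj
    have : (p:ℤ)^j = p^3 * p^(j-3) := by rw [← pow_add]; congr 1; omega
    rw [this]; ring
  have h0 : (-1:ℤ)^(r-0) = -1 := by rw [Nat.sub_zero]; exact hrodd.neg_one_pow
  have h1 : (-1:ℤ)^(r-1) = 1 := (Nat.Odd.sub_odd hrodd odd_one).neg_one_pow
  have h2 : (-1:ℤ)^(r-2) = -1 :=
    (Nat.Odd.sub_even (by omega) hrodd (by norm_num)).neg_one_pow
  have hexp := expand p r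
  rw [hsplit, htail] at hexp
  rw [Finset.sum_range_succ, Finset.sum_range_succ, Finset.sum_range_one,
    h0, h1, h2, T_zero, T_one p r (by omega) (by omega), hd] at hexp
  have hcast : ((p - r : ℕ) : ℤ) = (p:ℤ) - r := Nat.cast_sub (by omega)
  rw [hcast] at hexp
  linarith [hexp]

end Glaisher17

theorem stmt_17 (p r : ℕ) [hp : Fact p.Prime] (hp7 : 7 ≤ p)
    (hrodd : Odd r) (hr1 : 3 ≤ r) (hr2 : r ≤ p - 2) :
    ∃ z : ℤ_[p], (esymmA (p - 1) r : ℚ_[p]) =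
      ((p : ℚ_[p]) * ((p : ℚ_[p]) - (r : ℚ_[p])) / 2) * (esymmA (p - 1) (r - 1) : ℚ_[p])
      + (p : ℚ_[p]) ^ 3 * z := by
  obtain ⟨c, hc⟩ := Glaisher17.key p r hp.out hp7 hrodd hr1 hr2
  have hpodd : Odd p := hp.out.odd_of_ne_two (by omega)
  have h2c : (2:ℤ) ∣ c := by
    have hdvd : (2:ℤ) ∣ (p:ℤ)^3 * c := by
      have hev : Even ((p:ℤ) - r) := by
        have h1 : Odd (p:ℤ) := by exact_mod_cast hpodd
        have h2 : Odd (r:ℤ) := by exact_mod_cast hrodd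
        exact Odd.sub_odd h1 h2
      obtain ⟨k, hk⟩ := hev
      refine ⟨(esymmA (p-1) r : ℤ) - (p:ℤ) * k * (esymmA (p-1) (r-1) : ℤ), ?_⟩
      rw [← sub_eq_iff_eq_add'] at hc
      rw [← hc, hk]; ring
    rcases (Int.prime_two.dvd_mul.1 hdvd) with h | h
    · exfalso
      have h2p : (2:ℤ) ∣ (p:ℤ) := Int.prime_two.dvd_of_dvd_pow h
      have : (2:ℕ) ∣ p := by exact_mod_cast h2p
      obtain ⟨m, hm⟩ := hpodd
      omega
    · exact h
  obtain ⟨z', hz'⟩ := h2c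
  refine ⟨(z' : ℤ_[p]), ?_⟩
  have hQ := congrArg (fun x : ℤ => (x : ℚ_[p])) hc
  push_cast [hz'] at hQ ⊢
  have h2 : (2:ℚ_[p]) ≠ 0 := two_ne_zero
  field_simp
  linear_combination hQ
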